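/- Let F be the free group on three generators A, B, C, and let R ⊆ F consist of the four words (A*B*A)*(B*A*B)⁻¹, (B*C*B)*(C*B*C)⁻¹, (A*C*A)*(C*A*C)⁻¹ and (B*A*C*B)*(C*B*A*C)⁻¹. Let F' be the free group on three generators X, Y, Z, and let S ⊆ F' consist of the three words (X*Y*X)*(Y*X*Y)⁻¹, (Y*Z*Y)*(Z*Y*Z)⁻¹ and (X*Z)*(Z*X)⁻¹. Then the presented group ⟨A,B,C | R⟩ is isomorphic to the presented group ⟨X,Y,Z | S⟩, via an isomorphism sending the class of A to the class of X, the class of B to the class of X*Y*X⁻¹, and the class of C to the class of X*Y*Z*Y⁻¹*X⁻¹. -/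

import Mathlib

namespace BouquetStmt9

def A : FreeGroup (Fin 3) := FreeGroup.of 0
def B : FreeGroup (Fin 3) := FreeGroup.of 1
def C : FreeGroup (Fin 3) := FreeGroup.of 2

def R : Set (FreeGroup (Fin 3)) :=
  { (A * B * A) * (B * A * B)⁻¹,
    (B * C * B) * (C * B * C)⁻¹,
    (A * C * A) * (C * A * C)⁻¹,
    (B * A * C * B) * (C * B * A * C)⁻¹ }

def X : FreeGroup (Fin 3) := FreeGroup.of 0
def Y : FreeGroup (Fin 3) := FreeGroup.of 1
def Z : FreeGroup (Fin 3) := FreeGroup.of 2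

def S : Set (FreeGroup (Fin 3)) :=
  { (X * Y * X) * (Y * X * Y)⁻¹,
    (Y * Z * Y) * (Z * Y * Z)⁻¹,
    (X * Z) * (Z * X)⁻¹ }

lemma rel_eq {α : Type*} (rels : Set (FreeGroup α)) {u v : FreeGroup α} (h : u * v⁻¹ ∈ rels) :
    PresentedGroup.mk rels u = PresentedGroup.mk rels v := by
  have h1 : PresentedGroup.mk rels (u * v⁻¹) = 1 :=
    (QuotientGroup.eq_one_iff _).mpr (Subgroup.subset_normalClosure h)
  rw [map_mul, map_inv, mul_inv_eq_one] at h1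
  exact h1

section Keys
variable {G : Type*} [Group G] (x y z : G)

lemma key1 (hxy : x*y*x = y*x*y) :
    x*(x*y*x⁻¹)*x = (x*y*x⁻¹)*x*(x*y*x⁻¹) := by
  calc x*(x*y*x⁻¹)*x = x*(x*y*x)*x⁻¹ := by group
    _ = x*(y*x*y)*x⁻¹ := by rw [hxy]
    _ = (x*y*x⁻¹)*x*(x*y*x⁻¹) := by group

lemma key2 (hyz : y*z*y = z*y*z) :
    (x*y*x⁻¹)*(x*y*z*y⁻¹*x⁻¹)*(x*y*x⁻¹)
      = (x*y*z*y⁻¹*x⁻¹)*(x*y*x⁻¹)*(x*y*z*y⁻¹*x⁻¹) := by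
  calc (x*y*x⁻¹)*(x*y*z*y⁻¹*x⁻¹)*(x*y*x⁻¹)
      = x*y*(y*z*y)*y⁻¹*x⁻¹ := by group
    _ = x*y*(z*y*z)*y⁻¹*x⁻¹ := by rw [hyz]
    _ = (x*y*z*y⁻¹*x⁻¹)*(x*y*x⁻¹)*(x*y*z*y⁻¹*x⁻¹) := by group

lemma key3 (hxy : x*y*x = y*x*y) (hyz : y*z*y = z*y*z) (hxz : x*z = z*x) :
    x*(x*y*z*y⁻¹*x⁻¹)*x = (x*y*z*y⁻¹*x⁻¹)*x*(x*y*z*y⁻¹*x⁻¹) := by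
  have hxz' : x*z⁻¹ = z⁻¹*x := by
    calc x*z⁻¹ = z⁻¹*(z*x)*z⁻¹ := by group
      _ = z⁻¹*(x*z)*z⁻¹ := by rw [hxz]
      _ = z⁻¹*x := by group
  have h1 : y*z*y⁻¹ = z⁻¹*y*z := by
    calc y*z*y⁻¹ = z⁻¹*(z*y*z)*y⁻¹ := by group
      _ = z⁻¹*(y*z*y)*y⁻¹ := by rw [hyz]
      _ = z⁻¹*y*z := by group
  have key : x*(y*z*y⁻¹)*x = (y*z*y⁻¹)*x*(y*z*y⁻¹) := by
    calc x*(y*z*y⁻¹)*x = x*(z⁻¹*y*z)*x := by rw [h1]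
      _ = (x*z⁻¹)*y*(z*x) := by group
      _ = (z⁻¹*x)*y*(x*z) := by rw [hxz', ← hxz]
      _ = z⁻¹*(x*y*x)*z := by group
      _ = z⁻¹*(y*x*y)*z := by rw [hxy]
      _ = z⁻¹*y*(x*z)*(z⁻¹*y*z) := by group
      _ = z⁻¹*y*(z*x)*(z⁻¹*y*z) := by rw [hxz]
      _ = (z⁻¹*y*z)*x*(z⁻¹*y*z) := by group
      _ = (y*z*y⁻¹)*x*(y*z*y⁻¹) := by rw [h1]
  calc x*(x*y*z*y⁻¹*x⁻¹)*x = x*(x*(y*z*y⁻¹)*x)*x⁻¹*(x*x⁻¹) := by group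
    _ = x*((y*z*y⁻¹)*x*(y*z*y⁻¹))*x⁻¹*(x*x⁻¹) := by rw [key]
    _ = (x*y*z*y⁻¹*x⁻¹)*x*(x*y*z*y⁻¹*x⁻¹) := by group

lemma key4 (hyz : y*z*y = z*y*z) (hxz : x*z = z*x) :
    (x*y*x⁻¹)*x*(x*y*z*y⁻¹*x⁻¹)*(x*y*x⁻¹)
      = (x*y*z*y⁻¹*x⁻¹)*(x*y*x⁻¹)*x*(x*y*z*y⁻¹*x⁻¹) := by
  calc (x*y*x⁻¹)*x*(x*y*z*y⁻¹*x⁻¹)*(x*y*x⁻¹)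
      = x*y*x*(y*z*y)*y⁻¹*x⁻¹ := by group
    _ = x*y*x*(z*y*z)*y⁻¹*x⁻¹ := by rw [hyz]
    _ = x*y*(x*z)*(y*z*y⁻¹)*x⁻¹ := by group
    _ = x*y*(z*x)*(y*z*y⁻¹)*x⁻¹ := by rw [hxz]
    _ = (x*y*z*y⁻¹*x⁻¹)*(x*y*x⁻¹)*x*(x*y*z*y⁻¹*x⁻¹) := by group

lemma key1' (x y : G) (hab : x*y*x = y*x*y) :
    x*(x⁻¹*y*x)*x = (x⁻¹*y*x)*x*(x⁻¹*y*x) := by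
  calc x*(x⁻¹*y*x)*x = x⁻¹*(x*y*x)*x := by group
    _ = x⁻¹*(y*x*y)*x := by rw [hab]
    _ = (x⁻¹*y*x)*x*(x⁻¹*y*x) := by group

-- here a b c are generators of the other group
lemma key2' (a b c : G) (hbc : b*c*b = c*b*c) :
    (a⁻¹*b*a)*(a⁻¹*b⁻¹*c*b*a)*(a⁻¹*b*a)
      = (a⁻¹*b⁻¹*c*b*a)*(a⁻¹*b*a)*(a⁻¹*b⁻¹*c*b*a) := by
  calc (a⁻¹*b*a)*(a⁻¹*b⁻¹*c*b*a)*(a⁻¹*b*a)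
      = a⁻¹*b⁻¹*(b*c*b)*b*a := by group
    _ = a⁻¹*b⁻¹*(c*b*c)*b*a := by rw [hbc]
    _ = (a⁻¹*b⁻¹*c*b*a)*(a⁻¹*b*a)*(a⁻¹*b⁻¹*c*b*a) := by group

lemma key3' (a b c : G) (hbc : b*c*b = c*b*c) (hcyc : b*a*c*b = c*b*a*c) :
    a*(a⁻¹*b⁻¹*c*b*a) = (a⁻¹*b⁻¹*c*b*a)*a := by
  calc a*(a⁻¹*b⁻¹*c*b*a)
      = b⁻¹*(c*b*c)*(c⁻¹*a) := by group
    _ = b⁻¹*(b*c*b)*(c⁻¹*a) := by rw [← hbc]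
    _ = a⁻¹*b⁻¹*(b*a*c*b)*(c⁻¹*a) := by group
    _ = a⁻¹*b⁻¹*(c*b*a*c)*(c⁻¹*a) := by rw [hcyc]
    _ = (a⁻¹*b⁻¹*c*b*a)*a := by group

end Keys

-- relations in PresentedGroup S
lemma hXY : (PresentedGroup.of 0 : PresentedGroup S) * PresentedGroup.of 1 * PresentedGroup.of 0
    = PresentedGroup.of 1 * PresentedGroup.of 0 * PresentedGroup.of 1 := by
  simpa [PresentedGroup.of, X, Y, map_mul] using
    rel_eq S (u := X * Y * X) (v := Y * X * Y) (by simp [S])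

lemma hYZ : (PresentedGroup.of 1 : PresentedGroup S) * PresentedGroup.of 2 * PresentedGroup.of 1
    = PresentedGroup.of 2 * PresentedGroup.of 1 * PresentedGroup.of 2 := by
  simpa [PresentedGroup.of, Y, Z, map_mul] using
    rel_eq S (u := Y * Z * Y) (v := Z * Y * Z) (by simp [S])

lemma hXZ : (PresentedGroup.of 0 : PresentedGroup S) * PresentedGroup.of 2
    = PresentedGroup.of 2 * PresentedGroup.of 0 := by
  simpa [PresentedGroup.of, X, Z, map_mul] using
    rel_eq S (u := X * Z) (v := Z * X) (by simp [S])

-- relations in PresentedGroup R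
lemma hAB : (PresentedGroup.of 0 : PresentedGroup R) * PresentedGroup.of 1 * PresentedGroup.of 0
    = PresentedGroup.of 1 * PresentedGroup.of 0 * PresentedGroup.of 1 := by
  simpa [PresentedGroup.of, A, B, map_mul] using
    rel_eq R (u := A * B * A) (v := B * A * B) (by simp [R])

lemma hBC : (PresentedGroup.of 1 : PresentedGroup R) * PresentedGroup.of 2 * PresentedGroup.of 1
    = PresentedGroup.of 2 * PresentedGroup.of 1 * PresentedGroup.of 2 := by
  simpa [PresentedGroup.of, B, C, map_mul] using
    rel_eq R (u := B * C * B) (v := C * B * C) (by simp [R])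

lemma hAC : (PresentedGroup.of 0 : PresentedGroup R) * PresentedGroup.of 2 * PresentedGroup.of 0
    = PresentedGroup.of 2 * PresentedGroup.of 0 * PresentedGroup.of 2 := by
  simpa [PresentedGroup.of, A, C, map_mul] using
    rel_eq R (u := A * C * A) (v := C * A * C) (by simp [R])

lemma hCYC : (PresentedGroup.of 1 : PresentedGroup R) * PresentedGroup.of 0 * PresentedGroup.of 2
      * PresentedGroup.of 1
    = PresentedGroup.of 2 * PresentedGroup.of 1 * PresentedGroup.of 0 * PresentedGroup.of 2 := by
  simpa [PresentedGroup.of, A, B, C, map_mul] using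
    rel_eq R (u := B * A * C * B) (v := C * B * A * C) (by simp [R])

/-- target values of the forward map -/
def fφ : Fin 3 → PresentedGroup S
  | 0 => PresentedGroup.of 0
  | 1 => PresentedGroup.of 0 * PresentedGroup.of 1 * (PresentedGroup.of 0)⁻¹
  | 2 => PresentedGroup.of 0 * PresentedGroup.of 1 * PresentedGroup.of 2 *
      (PresentedGroup.of 1)⁻¹ * (PresentedGroup.of 0)⁻¹

/-- target values of the backward map -/
def fψ : Fin 3 → PresentedGroup R
  | 0 => PresentedGroup.of 0
  | 1 => (PresentedGroup.of 0)⁻¹ * PresentedGroup.of 1 * PresentedGroup.of 0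
  | 2 => (PresentedGroup.of 0)⁻¹ * (PresentedGroup.of 1)⁻¹ * PresentedGroup.of 2 *
      PresentedGroup.of 1 * PresentedGroup.of 0

lemma hfφ : ∀ r ∈ R, FreeGroup.lift fφ r = 1 := by
  rintro r hr
  simp only [R, Set.mem_insert_iff, Set.mem_singleton_iff] at hr
  set x := (PresentedGroup.of 0 : PresentedGroup S)
  set y := (PresentedGroup.of 1 : PresentedGroup S)
  set z := (PresentedGroup.of 2 : PresentedGroup S)
  have e0 : FreeGroup.lift fφ A = x := by simp [A, fφ]; rfl
  have e1 : FreeGroup.lift fφ B = x*y*x⁻¹ := by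
    simp [B, fφ]; rfl
  have e2 : FreeGroup.lift fφ C = x*y*z*y⁻¹*x⁻¹ := by
    simp [C, fφ]; rfl
  rcases hr with rfl | rfl | rfl | rfl <;>
    rw [map_mul, map_inv, mul_inv_eq_one] <;>
    simp only [map_mul, e0, e1, e2]
  · exact key1 x y (hXY)
  · exact key2 x y z (hYZ)
  · exact key3 x y z hXY hYZ hXZ
  · exact key4 x y z hYZ hXZ

lemma hfψ : ∀ r ∈ S, FreeGroup.lift fψ r = 1 := by
  rintro r hr
  simp only [S, Set.mem_insert_iff, Set.mem_singleton_iff] at hr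
  set a := (PresentedGroup.of 0 : PresentedGroup R)
  set b := (PresentedGroup.of 1 : PresentedGroup R)
  set c := (PresentedGroup.of 2 : PresentedGroup R)
  have e0 : FreeGroup.lift fψ X = a := by simp [X, fψ]; rfl
  have e1 : FreeGroup.lift fψ Y = a⁻¹*b*a := by
    simp [Y, fψ]; rfl
  have e2 : FreeGroup.lift fψ Z = a⁻¹*b⁻¹*c*b*a := by
    simp [Z, fψ]; rfl
  rcases hr with rfl | rfl | rfl <;>
    rw [map_mul, map_inv, mul_inv_eq_one] <;>
    simp only [map_mul, e0, e1, e2]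
  · exact key1' a b (hAB)
  · exact key2' a b c (hBC)
  · exact key3' a b c hBC (by
      have h := hCYC
      simpa using h)

def φ : PresentedGroup R →* PresentedGroup S := PresentedGroup.toGroup hfφ
def ψ : PresentedGroup S →* PresentedGroup R := PresentedGroup.toGroup hfψ

lemma comp1 : ψ.comp φ = MonoidHom.id _ := by
  ext i
  fin_cases i <;>
    simp [φ, ψ, PresentedGroup.toGroup.of, fφ, fψ, map_mul, map_inv] <;> group

lemma comp2 : φ.comp ψ = MonoidHom.id _ := by
  ext i
  fin_cases i <;>
    simp [φ, ψ, PresentedGroup.toGroup.of, fφ, fψ, map_mul, map_inv] <;> group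

theorem bouquet_presentation_iso_braid :
    ∃ e : PresentedGroup R ≃* PresentedGroup S,
      e (PresentedGroup.of 0) = PresentedGroup.of 0 ∧
      e (PresentedGroup.of 1)
        = PresentedGroup.of 0 * PresentedGroup.of 1 * (PresentedGroup.of 0)⁻¹ ∧
      e (PresentedGroup.of 2)
        = PresentedGroup.of 0 * PresentedGroup.of 1 * PresentedGroup.of 2 *
            (PresentedGroup.of 1)⁻¹ * (PresentedGroup.of 0)⁻¹ := by
  refine ⟨MonoidHom.toMulEquiv φ ψ comp1 comp2, ?_, ?_, ?_⟩ <;>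
    simp [MonoidHom.toMulEquiv, φ, PresentedGroup.toGroup.of, fφ]

end BouquetStmt9
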